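/- Let K : ℝ⁴↑ → ℝ satisfy the reverse triangle inequality, and define the path length L as the infimum over partitions of telescoping K-sums. If π : [s,r] → ℝ and η : [r,t] → ℝ are continuous with π(r) = η(r), and η⊕π : [s,t] → ℝ denotes their concatenation, then L(η⊕π) = L(π) + L(η). -/
import Mathlib


open scoped BigOperators

/-- The length of a continuous path `π : [s,t] → ℝ` with respect to a kernel `K` on
`ℝ⁴↑`: the infimum over finite partitions `s = τ 0 < τ 1 < … < τ k = t` of the
telescoping sums of `K` between consecutive points on the graph of `π`. -/
noncomputable def pathLen (K : ℝ × ℝ → ℝ × ℝ → ℝ) (s t : ℝ) (π : ℝ → ℝ) : EReal :=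
  sInf {L : EReal | ∃ k : ℕ, ∃ τ : ℕ → ℝ, 0 < k ∧ τ 0 = s ∧ τ k = t ∧
    StrictMonoOn τ (Set.Iic k) ∧
    L = ((∑ i ∈ Finset.range k, K (π (τ i), τ i) (π (τ (i + 1)), τ (i + 1)) : ℝ) : EReal)}

namespace PathLenAux

variable (K : ℝ × ℝ → ℝ × ℝ → ℝ)

def pSum (f : ℝ → ℝ) (k : ℕ) (τ : ℕ → ℝ) : ℝ :=
  ∑ i ∈ Finset.range k, K (f (τ i), τ i) (f (τ (i + 1)), τ (i + 1))

def pSet (s t : ℝ) (f : ℝ → ℝ) : Set EReal :=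
  {L : EReal | ∃ k : ℕ, ∃ τ : ℕ → ℝ, 0 < k ∧ τ 0 = s ∧ τ k = t ∧
    StrictMonoOn τ (Set.Iic k) ∧ L = ((pSum K f k τ : ℝ) : EReal)}

lemma pathLen_eq (s t : ℝ) (f : ℝ → ℝ) : pathLen K s t f = sInf (pSet K s t f) := rfl

lemma trivial_mem {s t : ℝ} (h : s < t) (f : ℝ → ℝ) :
    ((K (f s, s) (f t, t) : ℝ) : EReal) ∈ pSet K s t f := by
  refine ⟨1, fun i => if i = 0 then s else t, one_pos, by simp, by simp, ?_, ?_⟩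
  · intro i hi j hj hij
    simp only [Set.mem_Iic] at hi hj
    interval_cases i <;> interval_cases j <;> simp_all
  · simp [pSum]


lemma sigma_left {r : ℝ} (π η : ℝ → ℝ) {x : ℝ} (hx : x ≤ r) :
    (if x ≤ r then π x else η x) = π x := if_pos hx

lemma sigma_right {r : ℝ} (π η : ℝ → ℝ) (hmatch : π r = η r) {x : ℝ} (hx : r ≤ x) :
    (if x ≤ r then π x else η x) = η x := by
  by_cases h : x ≤ r
  · have hxr : x = r := le_antisymm h hx
    subst hxr; simpa using hmatch
  · exact if_neg h

lemma concat_mem {s r t : ℝ} (π η : ℝ → ℝ) (hmatch : π r = η r)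
    {k₁ k₂ : ℕ} {τ₁ τ₂ : ℕ → ℝ}
    (hk₁ : 0 < k₁) (h₁0 : τ₁ 0 = s) (h₁k : τ₁ k₁ = r) (hm₁ : StrictMonoOn τ₁ (Set.Iic k₁))
    (hk₂ : 0 < k₂) (h₂0 : τ₂ 0 = r) (h₂k : τ₂ k₂ = t) (hm₂ : StrictMonoOn τ₂ (Set.Iic k₂)) :
    ((pSum K π k₁ τ₁ + pSum K η k₂ τ₂ : ℝ) : EReal) ∈
      pSet K s t (fun z => if z ≤ r then π z else η z) := by
  set σ : ℝ → ℝ := fun z => if z ≤ r then π z else η z with hσ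
  set τ : ℕ → ℝ := fun i => if i ≤ k₁ then τ₁ i else τ₂ (i - k₁) with hτ
  have hτleft : ∀ i ≤ k₁, τ i = τ₁ i := fun i hi => if_pos hi
  have hτright : ∀ j ≤ k₂, τ (k₁ + j) = τ₂ j := by
    intro j hj
    rcases Nat.eq_zero_or_pos j with rfl | hj0
    · simp [hτ, h₁k, h₂0]
    · have : ¬ (k₁ + j ≤ k₁) := by omega
      simp [hτ, this]
  have hτ₁le : ∀ i ≤ k₁, τ₁ i ≤ r := by
    intro i hi
    rcases eq_or_lt_of_le hi with rfl | hi'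
    · exact le_of_eq h₁k
    · exact le_of_lt (h₁k ▸ hm₁ (Set.mem_Iic.2 hi) (Set.mem_Iic.2 le_rfl) hi')
  have hτ₂ge : ∀ j ≤ k₂, r ≤ τ₂ j := by
    intro j hj
    rcases Nat.eq_zero_or_pos j with rfl | hj0
    · exact le_of_eq h₂0.symm
    · exact le_of_lt (h₂0 ▸ hm₂ (Set.mem_Iic.2 (Nat.zero_le _)) (Set.mem_Iic.2 hj) hj0)
  refine ⟨k₁ + k₂, τ, by omega, by simpa using (hτleft 0 (Nat.zero_le _)).trans h₁0,
    by simpa using (hτright k₂ le_rfl).trans h₂k, ?_, ?_⟩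
  · intro a ha b hb hab
    simp only [Set.mem_Iic] at ha hb
    by_cases hbk : b ≤ k₁
    · rw [hτleft a (le_of_lt (lt_of_lt_of_le hab hbk)), hτleft b hbk]
      exact hm₁ (Set.mem_Iic.2 (le_of_lt (lt_of_lt_of_le hab hbk))) (Set.mem_Iic.2 hbk) hab
    · push_neg at hbk
      by_cases hak : a ≤ k₁
      · have hb' : τ b = τ₂ (b - k₁) := by
          have := hτright (b - k₁) (by omega); rwa [Nat.add_sub_cancel' (le_of_lt hbk)] at this
        rw [hτleft a hak, hb']
        calc τ₁ a ≤ r := hτ₁le a hak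
        _ = τ₂ 0 := h₂0.symm
        _ < τ₂ (b - k₁) := hm₂ (Set.mem_Iic.2 (Nat.zero_le _)) (Set.mem_Iic.2 (by omega)) (by omega)
      · push_neg at hak
        have ha' : τ a = τ₂ (a - k₁) := by
          have := hτright (a - k₁) (by omega); rwa [Nat.add_sub_cancel' (le_of_lt hak)] at this
        have hb' : τ b = τ₂ (b - k₁) := by
          have := hτright (b - k₁) (by omega); rwa [Nat.add_sub_cancel' (le_of_lt hbk)] at this
        rw [ha', hb']
        exact hm₂ (Set.mem_Iic.2 (by omega)) (Set.mem_Iic.2 (by omega)) (by omega)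
  · congr 1
    symm
    rw [pSum, Finset.sum_range_add]
    congr 1
    · apply Finset.sum_congr rfl
      intro i hi
      simp only [Finset.mem_range] at hi
      simp only [hσ]
      rw [hτleft i (by omega), hτleft (i+1) (by omega),
        sigma_left π η (hτ₁le i (by omega)), sigma_left π η (hτ₁le (i+1) (by omega))]
    · apply Finset.sum_congr rfl
      intro j hj
      simp only [Finset.mem_range] at hj
      simp only [hσ]
      rw [hτright j (by omega), show k₁ + j + 1 = k₁ + (j+1) from rfl, hτright (j+1) (by omega),
        sigma_right π η hmatch (hτ₂ge j (by omega)), sigma_right π η hmatch (hτ₂ge (j+1) (by omega))]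


lemma split_le {s r t : ℝ}
    (hK : ∀ x s u r y t : ℝ, s ≤ r → r ≤ t →
      K (x, s) (y, t) ≥ K (x, s) (u, r) + K (u, r) (y, t))
    (hsr : s < r) (hrt : r < t) (π η : ℝ → ℝ) (hmatch : π r = η r)
    {k : ℕ} {τ : ℕ → ℝ} (hk : 0 < k) (h0 : τ 0 = s) (hkt : τ k = t)
    (hm : StrictMonoOn τ (Set.Iic k)) :
    ∃ a b : ℝ, ((a : EReal) ∈ pSet K s r π) ∧ ((b : EReal) ∈ pSet K r t η) ∧
      a + b ≤ pSum K (fun z => if z ≤ r then π z else η z) k τ := by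
  classical
  set σ : ℝ → ℝ := fun z => if z ≤ r then π z else η z with hσ
  obtain ⟨m, hmlt, hτlt, hnext⟩ :
      ∃ m, m < k ∧ (∀ i ≤ m, τ i < r) ∧ r ≤ τ (m + 1) := by
    set P : ℕ → Prop := fun i => τ i < r with hP
    refine ⟨Nat.findGreatest P k, ?_, ?_, ?_⟩
    · have hPm : P (Nat.findGreatest P k) :=
        Nat.findGreatest_spec (Nat.zero_le k) (show P 0 by rw [hP]; simp [h0, hsr])
      have : ¬ P k := by rw [hP]; simp only [hkt]; exact not_lt.2 (le_of_lt hrt)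
      exact lt_of_le_of_ne (Nat.findGreatest_le k) (fun h => this (h ▸ hPm))
    · intro i hi
      have hPm : P (Nat.findGreatest P k) :=
        Nat.findGreatest_spec (Nat.zero_le k) (show P 0 by rw [hP]; simp [h0, hsr])
      rcases eq_or_lt_of_le hi with rfl | hi'
      · exact hPm
      · have hle : Nat.findGreatest P k ≤ k := Nat.findGreatest_le k
        exact lt_trans (hm (Set.mem_Iic.2 (by omega)) (Set.mem_Iic.2 (by omega)) hi') hPm
    · have hle : Nat.findGreatest P k ≤ k := Nat.findGreatest_le k
      have hlt : Nat.findGreatest P k < k := by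
        have hPm : P (Nat.findGreatest P k) :=
          Nat.findGreatest_spec (Nat.zero_le k) (show P 0 by rw [hP]; simp [h0, hsr])
        have : ¬ P k := by rw [hP]; simp only [hkt]; exact not_lt.2 (le_of_lt hrt)
        exact lt_of_le_of_ne hle (fun h => this (h ▸ hPm))
      exact not_lt.1 (Nat.findGreatest_is_greatest (Nat.lt_succ_self _) hlt)
  obtain ⟨d, rfl⟩ : ∃ d, k = m + 1 + d := ⟨k - (m + 1), by omega⟩
  have hτge : ∀ i, m + 1 ≤ i → i ≤ m + 1 + d → r ≤ τ i := by
    intro i h1 h2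
    rcases eq_or_lt_of_le h1 with rfl | h1'
    · exact hnext
    · exact le_trans hnext
        (le_of_lt (hm (Set.mem_Iic.2 (by omega)) (Set.mem_Iic.2 h2) h1'))
  by_cases hcase : τ (m + 1) = r
  · -- r is a partition point
    have hd : 0 < d := by
      rcases Nat.eq_zero_or_pos d with rfl | h
      · exfalso
        rw [show m + 1 + 0 = m + 1 by omega, hcase] at hkt
        exact absurd hkt (ne_of_lt hrt)
      · exact h
    refine ⟨pSum K π (m + 1) τ, pSum K η d (fun j => τ (m + 1 + j)), ?_, ?_, ?_⟩
    · exact ⟨m + 1, τ, by omega, h0, hcase,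
        hm.mono (Set.Iic_subset_Iic.2 (by omega)), rfl⟩
    · refine ⟨d, fun j => τ (m + 1 + j), hd, by simpa using hcase, by simpa using hkt, ?_, rfl⟩
      intro a ha b hb hab
      simp only [Set.mem_Iic] at ha hb
      exact hm (Set.mem_Iic.2 (by omega)) (Set.mem_Iic.2 (by omega)) (by omega)
    · apply le_of_eq
      have hR : pSum K σ (m + 1 + d) τ =
          pSum K σ (m + 1) τ + ∑ j ∈ Finset.range d,
            K (σ (τ (m + 1 + j)), τ (m + 1 + j)) (σ (τ (m + 1 + j + 1)), τ (m + 1 + j + 1)) := by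
        rw [pSum, Finset.sum_range_add, pSum]
      rw [hR]
      congr 1
      · rw [pSum, pSum]
        apply Finset.sum_congr rfl
        intro i hi
        simp only [Finset.mem_range] at hi
        have h1 : τ i ≤ r := le_of_lt (hτlt i (by omega))
        have h2 : τ (i + 1) ≤ r := by
          rcases eq_or_lt_of_le (show i + 1 ≤ m + 1 by omega) with h | h
          · rw [h, hcase]
          · exact le_of_lt (hτlt (i + 1) (by omega))
        simp only [hσ]
        rw [sigma_left π η h1, sigma_left π η h2]
      · rw [pSum]
        apply Finset.sum_congr rfl
        intro j hj
        simp only [Finset.mem_range] at hj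
        have h1 : r ≤ τ (m + 1 + j) := hτge _ (by omega) (by omega)
        have h2 : r ≤ τ (m + 1 + j + 1) := hτge _ (by omega) (by omega)
        simp only [hσ]
        rw [sigma_right π η hmatch h1, sigma_right π η hmatch h2]
        rfl
  · -- r is strictly between τ m and τ (m+1)
    have hnext' : r < τ (m + 1) := lt_of_le_of_ne hnext (fun h => hcase h.symm)
    set τL : ℕ → ℝ := fun j => if j ≤ m then τ j else r with hτL
    set τR : ℕ → ℝ := fun j => if j = 0 then r else τ (m + j) with hτR
    have hτLm : ∀ j ≤ m, τL j = τ j := fun j hj => if_pos hj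
    have hτLr : τL (m + 1) = r := if_neg (by omega)
    have hτR0 : τR 0 = r := if_pos rfl
    have hτRj : ∀ j, 1 ≤ j → τR j = τ (m + j) := fun j hj => if_neg (by omega)
    refine ⟨pSum K π (m + 1) τL, pSum K η (1 + d) τR, ?_, ?_, ?_⟩
    · refine ⟨m + 1, τL, by omega, by rw [hτLm 0 (by omega), h0], hτLr, ?_, rfl⟩
      intro a ha b hb hab
      simp only [Set.mem_Iic] at ha hb
      by_cases hbm : b ≤ m
      · rw [hτLm b hbm, hτLm a (by omega)]
        exact hm (Set.mem_Iic.2 (by omega)) (Set.mem_Iic.2 (by omega)) hab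
      · have hb1 : b = m + 1 := by omega
        rw [hb1, hτLr, hτLm a (by omega)]
        exact hτlt a (by omega)
    · refine ⟨1 + d, τR, by omega, hτR0, ?_, ?_, rfl⟩
      · rw [hτRj (1 + d) (by omega), show m + (1 + d) = m + 1 + d by omega, hkt]
      · intro a ha b hb hab
        simp only [Set.mem_Iic] at ha hb
        by_cases ha0 : a = 0
        · subst ha0
          rw [hτR0, hτRj b (by omega)]
          refine lt_of_lt_of_le hnext' ?_
          rcases eq_or_lt_of_le (show m + 1 ≤ m + b by omega) with h | h
          · rw [← h]
          · exact le_of_lt (hm (Set.mem_Iic.2 (by omega)) (Set.mem_Iic.2 (by omega)) h)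
        · rw [hτRj a (by omega), hτRj b (by omega)]
          exact hm (Set.mem_Iic.2 (by omega)) (Set.mem_Iic.2 (by omega)) (by omega)
    · -- the inequality, using hK once
      have hsplit : pSum K σ (m + 1 + d) τ =
          (∑ i ∈ Finset.range m, K (σ (τ i), τ i) (σ (τ (i+1)), τ (i+1)))
          + K (σ (τ m), τ m) (σ (τ (m+1)), τ (m+1))
          + ∑ j ∈ Finset.range d,
              K (σ (τ (m+1+j)), τ (m+1+j)) (σ (τ (m+1+j+1)), τ (m+1+j+1)) := by
        rw [pSum, Finset.sum_range_add, Finset.sum_range_succ]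
      have hA : pSum K π (m + 1) τL =
          (∑ i ∈ Finset.range m, K (σ (τ i), τ i) (σ (τ (i+1)), τ (i+1)))
          + K (π (τ m), τ m) (π r, r) := by
        rw [pSum, Finset.sum_range_succ]
        congr 1
        · apply Finset.sum_congr rfl
          intro i hi
          simp only [Finset.mem_range] at hi
          rw [hτLm i (by omega), hτLm (i + 1) (by omega)]
          simp only [hσ]
          rw [sigma_left π η (le_of_lt (hτlt i (by omega))),
            sigma_left π η (le_of_lt (hτlt (i+1) (by omega)))]
        · rw [hτLm m le_rfl, hτLr]
      have hB : pSum K η (1 + d) τR =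
          K (η r, r) (η (τ (m+1)), τ (m+1))
          + ∑ j ∈ Finset.range d,
              K (σ (τ (m+1+j)), τ (m+1+j)) (σ (τ (m+1+j+1)), τ (m+1+j+1)) := by
        rw [pSum, Finset.sum_range_add]
        congr 1
        · rw [Finset.sum_range_one, hτR0, hτRj (0 + 1) (by omega),
            show m + (0 + 1) = m + 1 by omega]
        · apply Finset.sum_congr rfl
          intro j hj
          simp only [Finset.mem_range] at hj
          rw [hτRj (1 + j) (by omega), hτRj (1 + j + 1) (by omega),
            show m + (1 + j) = m + 1 + j by omega, show m + (1 + j + 1) = m + 1 + j + 1 by omega]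
          simp only [hσ]
          rw [sigma_right π η hmatch (hτge _ (by omega) (by omega)),
            sigma_right π η hmatch (hτge _ (by omega) (by omega))]
      have hKmid : K (σ (τ m), τ m) (σ (τ (m+1)), τ (m+1)) ≥
          K (π (τ m), τ m) (π r, r) + K (η r, r) (η (τ (m+1)), τ (m+1)) := by
        have e1 : σ (τ m) = π (τ m) := by
          simp only [hσ]; exact sigma_left π η (le_of_lt (hτlt m le_rfl))
        have e2 : σ (τ (m+1)) = η (τ (m+1)) := by
          simp only [hσ]; exact sigma_right π η hmatch hnext
        rw [e1, e2, ← hmatch]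
        exact hK (π (τ m)) (τ m) (π r) r (η (τ (m+1))) (τ (m+1))
          (le_of_lt (hτlt m le_rfl)) hnext
      rw [hsplit, hA, hB]
      linarith

end PathLenAux

theorem pathLen_concat (K : ℝ × ℝ → ℝ × ℝ → ℝ)
    (hK : ∀ x s u r y t : ℝ, s ≤ r → r ≤ t →
      K (x, s) (y, t) ≥ K (x, s) (u, r) + K (u, r) (y, t))
    (s r t : ℝ) (hsr : s < r) (hrt : r < t)
    (π η : ℝ → ℝ)
    (hπ : ContinuousOn π (Set.Icc s r)) (hη : ContinuousOn η (Set.Icc r t))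
    (hmatch : π r = η r) :
    pathLen K s t (fun z => if z ≤ r then π z else η z) =
      pathLen K s r π + pathLen K r t η := by
  classical
  rw [PathLenAux.pathLen_eq, PathLenAux.pathLen_eq, PathLenAux.pathLen_eq]
  have hAne := PathLenAux.trivial_mem K hsr π
  have hBne := PathLenAux.trivial_mem K hrt η
  apply le_antisymm
  · refine EReal.le_add_of_forall_gt ?_ ?_ ?_
    · exact Or.inr (lt_of_le_of_lt (sInf_le hBne) (EReal.coe_lt_top _)).ne
    · exact Or.inl (lt_of_le_of_lt (sInf_le hAne) (EReal.coe_lt_top _)).ne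
    · intro a' ha' b' hb'
      obtain ⟨x, hx, hxa⟩ := sInf_lt_iff.1 ha'
      obtain ⟨y, hy, hyb⟩ := sInf_lt_iff.1 hb'
      obtain ⟨k₁, τ₁, hk₁, h₁0, h₁k, hm₁, rfl⟩ := hx
      obtain ⟨k₂, τ₂, hk₂, h₂0, h₂k, hm₂, rfl⟩ := hy
      have hmem := PathLenAux.concat_mem K π η hmatch hk₁ h₁0 h₁k hm₁ hk₂ h₂0 h₂k hm₂
      calc sInf (PathLenAux.pSet K s t (fun z => if z ≤ r then π z else η z))
          ≤ ((PathLenAux.pSum K π k₁ τ₁ + PathLenAux.pSum K η k₂ τ₂ : ℝ) : EReal) :=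
            sInf_le hmem
        _ = ((PathLenAux.pSum K π k₁ τ₁ : ℝ) : EReal)
            + ((PathLenAux.pSum K η k₂ τ₂ : ℝ) : EReal) := EReal.coe_add _ _
        _ ≤ a' + b' := add_le_add hxa.le hyb.le
  · refine le_sInf fun c hc => ?_
    obtain ⟨k, τ, hk, h0, hkt, hmono, rfl⟩ := hc
    obtain ⟨a, b, ha, hb, hab⟩ :=
      PathLenAux.split_le K hK hsr hrt π η hmatch hk h0 hkt hmono
    calc sInf (PathLenAux.pSet K s r π) + sInf (PathLenAux.pSet K r t η)
        ≤ ((a : ℝ) : EReal) + ((b : ℝ) : EReal) := add_le_add (sInf_le ha) (sInf_le hb)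
      _ = ((a + b : ℝ) : EReal) := (EReal.coe_add _ _).symm
      _ ≤ _ := EReal.coe_le_coe_iff.2 hab
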